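/- In binary classification (Y = {0,1}), the mapping h ↦ B_h with B_h = {h, 1−h} is a successful base class with uniform convergence rate e(n) = 1/√n and constant α = 1/2. That is, for every distribution D on X × {0,1}, every hypothesis h, and every n: (i) LG_{n+1}(h) ≤ LG_n(h); (ii) E_{S∼D^n}[max(|Err_S(h) − Err_D(h)|, |Err_S(1−h) − Err_D(1−h)|)] ≤ 1/√n; and (iii) LG_0(h) = 1/2. -/

import Mathlib

open MeasureTheory Finset Filter

noncomputable section

set_option linter.unusedSectionVars false

variable {X : Type*} [MeasurableSpace X] {k : ℕ}

/-- Population (true) loss of hypothesis `h` under distribution `D`. -/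
def errD (D : Measure (X × Fin k)) (h : X → Fin k) : ℝ :=
  (D {p | h p.1 ≠ p.2}).toReal

/-- Empirical loss of `h` on the sample `S`. -/
def errS {n : ℕ} (S : Fin n → X × Fin k) (h : X → Fin k) : ℝ :=
  ((Finset.univ.filter fun i => h (S i).1 ≠ (S i).2).card : ℝ) / n

/-- Expected value of `φ` under the PMF `μ`. -/
def pmfExp {H : Type*} (μ : PMF H) (φ : H → ℝ) : ℝ := ∑' f, (μ f).toReal * φ f

open scoped Classical in
/-- The set of empirical risk minimizers in `B` with respect to the sample `S`. -/
def ermSet {n : ℕ} (B : Finset (X → Fin k)) (S : Fin n → X × Fin k) :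
    Finset (X → Fin k) :=
  B.filter fun f => ∀ g ∈ B, errS S f ≤ errS S g

theorem ermSet_nonempty {n : ℕ} (B : Finset (X → Fin k)) (hB : B.Nonempty)
    (S : Fin n → X × Fin k) : (ermSet B S).Nonempty := by
  classical
  obtain ⟨f, hf, hmin⟩ := Finset.exists_min_image B (errS S) hB
  refine ⟨f, ?_⟩
  simp only [ermSet, Finset.mem_filter]
  exact ⟨hf, hmin⟩

/-- The randomized ERM `G(h,S)`: a uniformly random empirical risk minimizer in `B`.
(On the empty sample all empirical losses are `0`, so this is uniform on `B`.) -/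
def ermPMF {n : ℕ} (B : Finset (X → Fin k)) (hB : B.Nonempty)
    (S : Fin n → X × Fin k) : PMF (X → Fin k) :=
  PMF.uniformOfFinset (ermSet B S) (ermSet_nonempty B hB S)

/-- `LG D B hB n = E_{S ∼ D^n} E[Err_D (G(h,S))]`: the expected population loss of the
randomized ERM over `B` trained on `n` i.i.d. examples from `D`. -/
def LG (D : Measure (X × Fin k)) (B : Finset (X → Fin k)) (hB : B.Nonempty) (n : ℕ) : ℝ :=
  ∫ S, pmfExp (ermPMF B hB S) (errD D) ∂(Measure.pi fun _ : Fin n => D)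


open scoped Classical in
/-- The binary base class `B_h = {h, 1 - h}` consisting of `h` and its pointwise negation. -/
def Bbin (h : X → Fin 2) : Finset (X → Fin 2) := {h, fun x => 1 - h x}

theorem Bbin_nonempty (h : X → Fin 2) : (Bbin h).Nonempty :=
  ⟨h, by simp [Bbin]⟩



section Aux
open scoped Classical

def errset (h : X → Fin 2) : Set (X × Fin 2) := {z | h z.1 ≠ z.2}

def cnt (h : X → Fin 2) {n : ℕ} (S : Fin n → X × Fin 2) : ℕ :=
  (Finset.univ.filter fun i => h (S i).1 ≠ (S i).2).card

lemma errset_meas {h : X → Fin 2} (hm : Measurable h) : MeasurableSet (errset h) := by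
  have : errset h = (fun z : X × Fin 2 => (h z.1, z.2)) ⁻¹' {q : Fin 2 × Fin 2 | q.1 ≠ q.2} := rfl
  rw [this]
  exact ((hm.comp measurable_fst).prodMk measurable_snd)
    ((Set.to_countable _).measurableSet)

lemma cnt_eq_sum (h : X → Fin 2) {n : ℕ} (S : Fin n → X × Fin 2) :
    cnt h S = ∑ i, (if S i ∈ errset h then 1 else 0) := by
  rw [cnt, Finset.card_filter]
  exact Finset.sum_congr rfl fun i _ => by congr 1

lemma cnt_le (h : X → Fin 2) {n : ℕ} (S : Fin n → X × Fin 2) : cnt h S ≤ n := by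
  simpa [cnt] using Finset.card_filter_le Finset.univ (fun i => h (S i).1 ≠ (S i).2)

lemma cnt_meas {h : X → Fin 2} (hm : Measurable h) {n : ℕ} :
    Measurable (cnt h (n := n)) := by
  have : cnt h (n := n) = fun S => ∑ i, (if S i ∈ errset h then 1 else 0) := by
    funext S; exact cnt_eq_sum h S
  rw [this]
  refine Finset.measurable_sum _ fun i _ => ?_
  exact Measurable.ite ((measurable_pi_apply i) (errset_meas hm)) measurable_const
    measurable_const

lemma fin2_sub_ne (a b : Fin 2) : (1 - a ≠ b) ↔ a = b := by revert a b; decide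

lemma fin2_ne_sub (a : Fin 2) : a ≠ 1 - a := by revert a; decide

lemma errS_eq (h : X → Fin 2) {n : ℕ} (S : Fin n → X × Fin 2) :
    errS S h = (cnt h S : ℝ) / n := rfl

lemma cnt_neg (h : X → Fin 2) {n : ℕ} (S : Fin n → X × Fin 2) :
    cnt (fun x => 1 - h x) S = n - cnt h S := by
  have : (Finset.univ.filter fun i => (1 - h (S i).1) ≠ (S i).2)
      = Finset.univ.filter fun i => ¬ (h (S i).1 ≠ (S i).2) := by
    apply Finset.filter_congr
    intro i _
    simp [fin2_sub_ne]
  rw [cnt, this, Finset.filter_not, Finset.card_sdiff_of_subset (Finset.filter_subset _ _)]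
  simp [cnt]

lemma errS_neg (h : X → Fin 2) {n : ℕ} (S : Fin n → X × Fin 2) :
    errS S (fun x => 1 - h x) = ((n : ℝ) - cnt h S) / n := by
  rw [errS_eq, cnt_neg]
  congr 1
  exact_mod_cast Nat.cast_sub (cnt_le h S)

lemma errD_neg (D : Measure (X × Fin 2)) [IsProbabilityMeasure D] (h : X → Fin 2)
    (hm : Measurable h) : errD D (fun x => 1 - h x) = 1 - errD D h := by
  have hset : {p : X × Fin 2 | (1 - h p.1) ≠ p.2} = (errset h)ᶜ := by
    ext z
    simp [errset, fin2_sub_ne]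
  rw [errD, hset, measure_compl (errset_meas hm) (measure_ne_top D _)]
  rw [measure_univ, ENNReal.toReal_sub_of_le prob_le_one ENNReal.one_ne_top]
  simp [errD, errset]

lemma errD_nonneg (D : Measure (X × Fin 2)) (h : X → Fin 2) : 0 ≤ errD D h :=
  ENNReal.toReal_nonneg

lemma errD_le_one (D : Measure (X × Fin 2)) [IsProbabilityMeasure D] (h : X → Fin 2) :
    errD D h ≤ 1 := by
  rw [errD]
  exact ENNReal.toReal_le_of_le_ofReal one_pos.le (by simpa using prob_le_one)

/-- value of the randomized ERM's expected loss as a function of the error count. -/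
def psi (p : ℝ) (n k : ℕ) : ℝ := if 2*k < n then p else if 2*k = n then 1/2 else 1 - p

lemma pmfExp_uniform {H : Type*} (s : Finset H) (hs : s.Nonempty) (φ : H → ℝ) :
    pmfExp (PMF.uniformOfFinset s hs) φ = ∑ f ∈ s, φ f / s.card := by
  rw [pmfExp, tsum_eq_sum (s := s) (by
    intro f hf
    simp [PMF.uniformOfFinset_apply, hf])]
  refine Finset.sum_congr rfl fun f hf => ?_
  rw [PMF.uniformOfFinset_apply, if_pos hf]
  rw [ENNReal.toReal_inv]
  simp [div_eq_inv_mul]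

lemma mem_bbin {h f : X → Fin 2} : f ∈ Bbin h ↔ f = h ∨ f = fun x => 1 - h x := by
  rw [Bbin, Finset.mem_insert, Finset.mem_singleton]

lemma ermSet_bbin_lt {h : X → Fin 2} {n : ℕ} {S : Fin n → X × Fin 2}
    (hab : errS S h < errS S (fun x => 1 - h x)) : ermSet (Bbin h) S = {h} := by
  ext f
  simp only [ermSet, Finset.mem_filter, Finset.mem_singleton]
  constructor
  · rintro ⟨hfB, hall⟩
    rcases mem_bbin.1 hfB with rfl | rfl
    · rfl
    · exact absurd (hall h (mem_bbin.2 (Or.inl rfl))) (not_le.mpr hab)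
  · rintro rfl
    refine ⟨mem_bbin.2 (Or.inl rfl), ?_⟩
    intro g' hg'
    rcases mem_bbin.1 hg' with rfl | rfl
    · exact le_refl _
    · exact hab.le

lemma ermSet_bbin_gt {h : X → Fin 2} {n : ℕ} {S : Fin n → X × Fin 2}
    (hab : errS S (fun x => 1 - h x) < errS S h) :
    ermSet (Bbin h) S = {fun x => 1 - h x} := by
  ext f
  simp only [ermSet, Finset.mem_filter, Finset.mem_singleton]
  constructor
  · rintro ⟨hfB, hall⟩
    rcases mem_bbin.1 hfB with rfl | rfl
    · exact absurd (hall _ (mem_bbin.2 (Or.inr rfl))) (not_le.mpr hab)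
    · rfl
  · rintro rfl
    refine ⟨mem_bbin.2 (Or.inr rfl), ?_⟩
    intro g' hg'
    rcases mem_bbin.1 hg' with rfl | rfl
    · exact hab.le
    · exact le_refl _

lemma ermSet_bbin_eq {h : X → Fin 2} {n : ℕ} {S : Fin n → X × Fin 2}
    (hab : errS S h = errS S (fun x => 1 - h x)) : ermSet (Bbin h) S = Bbin h := by
  rw [ermSet, Finset.filter_true_of_mem]
  rintro f hf g hg
  rcases mem_bbin.1 hf with rfl | rfl <;> rcases mem_bbin.1 hg with rfl | rfl
  · exact le_refl _
  · exact hab.le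
  · exact hab.ge
  · exact le_refl _

lemma pmfExp_uniform_congr {H : Type*} {s t : Finset H} (hst : s = t) (hs : s.Nonempty)
    (φ : H → ℝ) : pmfExp (PMF.uniformOfFinset s hs) φ = ∑ f ∈ t, φ f / t.card := by
  subst hst; exact pmfExp_uniform s hs φ

lemma hne_of_nonempty [Nonempty X] (h : X → Fin 2) : h ≠ fun x => 1 - h x := by
  intro e
  obtain ⟨x⟩ := ‹Nonempty X›
  exact fin2_ne_sub (h x) (congrFun e x)

lemma integrand_eq (D : Measure (X × Fin 2)) [IsProbabilityMeasure D] [Nonempty X]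
    (h : X → Fin 2) (hm : Measurable h) {n : ℕ} (S : Fin n → X × Fin 2) :
    pmfExp (ermPMF (Bbin h) (Bbin_nonempty h) S) (errD D) = psi (errD D h) n (cnt h S) := by
  have hne := hne_of_nonempty h
  have hn0 : (0:ℝ) ≤ (n:ℝ) := Nat.cast_nonneg n
  rcases lt_trichotomy (2 * cnt h S) n with hc | hc | hc
  · have hn : (0:ℝ) < n := by
      have : 0 < n := by omega
      exact_mod_cast this
    have hab : errS S h < errS S (fun x => 1 - h x) := by
      rw [errS_eq, errS_neg]
      apply div_lt_div_of_pos_right ?_ hn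
      have : (2 * cnt h S : ℝ) < n := by exact_mod_cast hc
      linarith
    rw [ermPMF, pmfExp_uniform_congr (ermSet_bbin_lt hab)]
    simp [psi, hc]
  · have hab : errS S h = errS S (fun x => 1 - h x) := by
      rw [errS_eq, errS_neg]
      congr 1
      have : (2 * cnt h S : ℝ) = n := by exact_mod_cast hc
      linarith
    rw [ermPMF, pmfExp_uniform_congr (ermSet_bbin_eq hab)]
    have hnm : h ∉ ({fun x => 1 - h x} : Finset (X → Fin 2)) := by
      simpa using hne
    rw [Bbin, Finset.sum_insert hnm, Finset.card_insert_of_notMem hnm, Finset.card_singleton,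
      Finset.sum_singleton, errD_neg D h hm]
    · have : ¬ (2 * cnt h S < n) := by omega
      rw [psi, if_neg this, if_pos hc]
      ring
  · have hn : (0:ℝ) < n := by
      have hle := cnt_le h S
      have : 0 < n := by omega
      exact_mod_cast this
    have hab : errS S (fun x => 1 - h x) < errS S h := by
      rw [errS_neg h, errS_eq h]
      apply div_lt_div_of_pos_right ?_ hn
      have : (n:ℝ) < 2 * cnt h S := by exact_mod_cast hc
      linarith
    rw [ermPMF, pmfExp_uniform_congr (ermSet_bbin_gt hab)]
    rw [Finset.sum_singleton, Finset.card_singleton, errD_neg D h hm]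
    · have h1 : ¬ (2 * cnt h S < n) := by omega
      have h2 : ¬ (2 * cnt h S = n) := by omega
      rw [psi, if_neg h1, if_neg h2]
      simp

/-- binomial probabilities: measure of the event `cnt = k`. -/
def Pb (D : Measure (X × Fin 2)) (h : X → Fin 2) (n k : ℕ) : ℝ :=
  ((Measure.pi fun _ : Fin n => D) {S | cnt h S = k}).toReal

lemma cnt_set_meas {h : X → Fin 2} (hm : Measurable h) {n k : ℕ} :
    MeasurableSet {S : Fin n → X × Fin 2 | cnt h S = k} :=
  (cnt_meas hm) (measurableSet_singleton k)

lemma abs_le_sum_abs (φ : ℕ → ℝ) {m N : ℕ} (hm : m ≤ N) :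
    |φ m| ≤ ∑ k ∈ Finset.range (N+1), |φ k| :=
  Finset.single_le_sum (f := fun k => |φ k|) (fun k _ => abs_nonneg _)
    (Finset.mem_range.mpr (by omega))

lemma comp_cnt_eq_sum (h : X → Fin 2) (φ : ℕ → ℝ) {n : ℕ} (S : Fin n → X × Fin 2) :
    φ (cnt h S) = ∑ k ∈ Finset.range (n+1), if cnt h S = k then φ k else 0 := by
  rw [Finset.sum_ite_eq, if_pos (Finset.mem_range.mpr (by have := cnt_le h S; omega))]

lemma integrable_comp_cnt {h : X → Fin 2} (hm : Measurable h) (φ : ℕ → ℝ) {n : ℕ}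
    (D : Measure (X × Fin 2)) [IsProbabilityMeasure D] :
    Integrable (fun S => φ (cnt h S)) (Measure.pi fun _ : Fin n => D) := by
  refine Integrable.mono' (integrable_const (∑ k ∈ Finset.range (n+1), |φ k|))
    ?_ (Filter.Eventually.of_forall fun S => abs_le_sum_abs φ (cnt_le h S))
  exact (Measurable.aestronglyMeasurable (measurable_from_top.comp (cnt_meas hm)))

lemma integral_comp_cnt (D : Measure (X × Fin 2)) [IsProbabilityMeasure D]
    {h : X → Fin 2} (hm : Measurable h) (φ : ℕ → ℝ) {n : ℕ} :
    ∫ S, φ (cnt h S) ∂(Measure.pi fun _ : Fin n => D)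
      = ∑ k ∈ Finset.range (n+1), φ k * Pb D h n k := by
  have hrw : (fun S : Fin n → X × Fin 2 => φ (cnt h S))
      = fun S => ∑ k ∈ Finset.range (n+1),
          Set.indicator {T : Fin n → X × Fin 2 | cnt h T = k} (fun _ => φ k) S := by
    funext S
    rw [comp_cnt_eq_sum h φ S]
    refine Finset.sum_congr rfl fun k _ => ?_
    by_cases hc : cnt h S = k <;> simp [Set.indicator_apply, Set.mem_setOf_eq, hc]
  rw [hrw, integral_finset_sum]
  · refine Finset.sum_congr rfl fun k _ => ?_
    rw [integral_indicator_const _ (cnt_set_meas hm), smul_eq_mul, mul_comm]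
    rfl
  · intro k _
    exact (integrable_const (φ k)).indicator (cnt_set_meas hm)

lemma compl_toReal (D : Measure (X × Fin 2)) [IsProbabilityMeasure D]
    {h : X → Fin 2} (hm : Measurable h) :
    (D (errset h)ᶜ).toReal = 1 - errD D h := by
  rw [measure_compl (errset_meas hm) (measure_ne_top D _), measure_univ,
    ENNReal.toReal_sub_of_le prob_le_one ENNReal.one_ne_top]
  simp [errD, errset]

lemma fubini_step (D : Measure (X × Fin 2)) [IsProbabilityMeasure D]
    {h : X → Fin 2} (hm : Measurable h) (φ : ℕ → ℝ) {n : ℕ} :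
    ∫ S, φ (cnt h S) ∂(Measure.pi fun _ : Fin (n+1) => D)
      = errD D h * (∫ S, φ (1 + cnt h S) ∂(Measure.pi fun _ : Fin n => D))
        + (1 - errD D h) * ∫ S, φ (cnt h S) ∂(Measure.pi fun _ : Fin n => D) := by
  have hmp := (measurePreserving_piFinSuccAbove (fun _ : Fin (n+1) => D) 0).symm
  rw [← MeasurePreserving.integral_comp' hmp (fun S => φ (cnt h S))]
  have hcnt : ∀ (z : (X × Fin 2) × (Fin n → X × Fin 2)),
      cnt h ((MeasurableEquiv.piFinSuccAbove (fun _ : Fin (n+1) => X × Fin 2) 0).symm z)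
        = (if z.1 ∈ errset h then 1 else 0) + cnt h z.2 := by
    rintro ⟨x, T⟩
    have he : (MeasurableEquiv.piFinSuccAbove (fun _ : Fin (n+1) => X × Fin 2) 0).symm (x, T)
        = Fin.insertNth 0 x T := rfl
    rw [he, cnt_eq_sum, cnt_eq_sum, Fin.sum_univ_succ, Fin.insertNth_apply_same]
    simp only [Fin.insertNth_zero, Fin.cons_succ]
    simp
  calc ∫ z, φ (cnt h ((MeasurableEquiv.piFinSuccAbove
          (fun _ : Fin (n+1) => X × Fin 2) 0).symm z))
          ∂(D.prod (Measure.pi fun _ : Fin n => D))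
      = ∫ z, φ ((if z.1 ∈ errset h then 1 else 0) + cnt h z.2)
          ∂(D.prod (Measure.pi fun _ : Fin n => D)) := by
        congr 1; funext z; rw [hcnt]
    _ = ∫ x, ∫ T, φ ((if x ∈ errset h then 1 else 0) + cnt h T)
          ∂(Measure.pi fun _ : Fin n => D) ∂D := by
        apply MeasureTheory.integral_prod
        refine Integrable.mono' (integrable_const (∑ k ∈ Finset.range (n+2), |φ k|))
          ?_ (Filter.Eventually.of_forall fun z => abs_le_sum_abs φ
            (by have := cnt_le h z.2; split <;> omega))
        apply Measurable.aestronglyMeasurable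
        apply measurable_from_top.comp
        apply Measurable.add
        · exact Measurable.ite ((errset_meas hm).preimage measurable_fst) measurable_const
            measurable_const
        · exact (cnt_meas hm).comp measurable_snd
    _ = errD D h * (∫ S, φ (1 + cnt h S) ∂(Measure.pi fun _ : Fin n => D))
        + (1 - errD D h) * ∫ S, φ (cnt h S) ∂(Measure.pi fun _ : Fin n => D) := by
        set A := ∫ S, φ (1 + cnt h S) ∂(Measure.pi fun _ : Fin n => D) with hA
        set B := ∫ S, φ (cnt h S) ∂(Measure.pi fun _ : Fin n => D) with hB
        have hinner : (fun x => ∫ T, φ ((if x ∈ errset h then 1 else 0) + cnt h T)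
            ∂(Measure.pi fun _ : Fin n => D)) = fun x => if x ∈ errset h then A else B := by
          funext x
          by_cases hx : x ∈ errset h <;> simp [hx, hA, hB]
        rw [hinner]
        have hsplit : (fun x => if x ∈ errset h then A else B)
            = fun x => Set.indicator (errset h) (fun _ => A) x
              + Set.indicator (errset h)ᶜ (fun _ => B) x := by
          funext x
          by_cases hx : x ∈ errset h <;>
            simp [Set.indicator_apply, hx]
        rw [hsplit, integral_add
            (((integrable_const A).indicator (errset_meas hm)))
            (((integrable_const B).indicator (errset_meas hm).compl)),
          integral_indicator_const _ (errset_meas hm),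
          integral_indicator_const _ (errset_meas hm).compl,
          Measure.real, Measure.real, compl_toReal D hm]
        rw [smul_eq_mul, smul_eq_mul]
        rfl

lemma Pb_nonneg (D : Measure (X × Fin 2)) (h : X → Fin 2) (n k : ℕ) : 0 ≤ Pb D h n k :=
  ENNReal.toReal_nonneg

lemma Pb_gt (D : Measure (X × Fin 2)) (h : X → Fin 2) {n k : ℕ} (hk : n < k) :
    Pb D h n k = 0 := by
  have : {S : Fin n → X × Fin 2 | cnt h S = k} = ∅ := by
    ext S
    simp only [Set.mem_setOf_eq, Set.mem_empty_iff_false, iff_false]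
    have := cnt_le h S
    omega
  rw [Pb, this]
  simp

lemma int_ind (D : Measure (X × Fin 2)) [IsProbabilityMeasure D]
    {h : X → Fin 2} (hm : Measurable h) (n k : ℕ) :
    ∫ S, (if cnt h S = k then (1:ℝ) else 0) ∂(Measure.pi fun _ : Fin n => D)
      = Pb D h n k := by
  have : (fun S : Fin n → X × Fin 2 => if cnt h S = k then (1:ℝ) else 0)
      = Set.indicator {S : Fin n → X × Fin 2 | cnt h S = k} (fun _ => (1:ℝ)) := by
    funext S
    by_cases hc : cnt h S = k <;> simp [Set.indicator_apply, Set.mem_setOf_eq, hc]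
  rw [this, integral_indicator_const _ (cnt_set_meas hm), smul_eq_mul, mul_one]
  rfl

lemma Pb_zero_zero (D : Measure (X × Fin 2)) [IsProbabilityMeasure D] (h : X → Fin 2) :
    Pb D h 0 0 = 1 := by
  have : {S : Fin 0 → X × Fin 2 | cnt h S = 0} = Set.univ := by
    ext S
    simp [cnt]
  rw [Pb, this, measure_univ]
  rfl

lemma Pb_succ_zero (D : Measure (X × Fin 2)) [IsProbabilityMeasure D]
    {h : X → Fin 2} (hm : Measurable h) (n : ℕ) :
    Pb D h (n+1) 0 = (1 - errD D h) * Pb D h n 0 := by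
  have := fubini_step D hm (fun m => if m = 0 then (1:ℝ) else 0) (n := n)
  simp only [Nat.add_eq_zero, Nat.succ_ne_zero, and_false, if_false,
    one_ne_zero, false_and] at this
  rw [int_ind D hm] at this
  rw [this, int_ind D hm]
  simp

lemma Pb_succ_succ (D : Measure (X × Fin 2)) [IsProbabilityMeasure D]
    {h : X → Fin 2} (hm : Measurable h) (n k : ℕ) :
    Pb D h (n+1) (k+1)
      = errD D h * Pb D h n k + (1 - errD D h) * Pb D h n (k+1) := by
  have := fubini_step D hm (fun m => if m = k + 1 then (1:ℝ) else 0) (n := n)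
  rw [int_ind D hm] at this
  rw [this, int_ind D hm]
  congr 2
  · have : (fun S : Fin n → X × Fin 2 => if 1 + cnt h S = k + 1 then (1:ℝ) else 0)
        = fun S => if cnt h S = k then (1:ℝ) else 0 := by
      funext S
      congr 1
      simp only [eq_iff_iff]
      omega
    rw [this, int_ind D hm]

lemma Pb_formula (D : Measure (X × Fin 2)) [IsProbabilityMeasure D]
    {h : X → Fin 2} (hm : Measurable h) :
    ∀ n k : ℕ, k ≤ n → Pb D h n k
      = (n.choose k : ℝ) * errD D h ^ k * (1 - errD D h) ^ (n - k) := by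
  intro n
  induction n with
  | zero =>
      intro k hk
      interval_cases k
      simp [Pb_zero_zero D h]
  | succ n ih =>
      intro k hk
      match k with
      | 0 =>
          rw [Pb_succ_zero D hm n, ih 0 (Nat.zero_le n)]
          simp [pow_succ]
          ring
      | (k+1) =>
          rw [Pb_succ_succ D hm n k]
          rcases Nat.lt_or_ge k n with hkn | hkn
          · rw [ih k (by omega), ih (k+1) (by omega),
              Nat.choose_succ_succ n k]
            have h1 : n + 1 - (k + 1) = n - k := by omega
            have h2 : n - k = (n - (k+1)) + 1 := by omega
            rw [h1, h2]
            push_cast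
            ring
          · have hkeq : k = n := by omega
            subst hkeq
            rw [ih k (le_refl k), Pb_gt D h (by omega)]
            simp [Nat.choose_self, pow_succ]
            ring

lemma sum_Pb (D : Measure (X × Fin 2)) [IsProbabilityMeasure D]
    {h : X → Fin 2} (hm : Measurable h) (n : ℕ) :
    ∑ k ∈ Finset.range (n+1), Pb D h n k = 1 := by
  have := integral_comp_cnt D hm (fun _ => (1:ℝ)) (n := n)
  simp only [one_mul] at this
  rw [← this]
  simp

lemma LG_eq (D : Measure (X × Fin 2)) [IsProbabilityMeasure D] [Nonempty X]
    {h : X → Fin 2} (hm : Measurable h) (n : ℕ) :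
    LG D (Bbin h) (Bbin_nonempty h) n
      = ∑ k ∈ Finset.range (n+1), psi (errD D h) n k * Pb D h n k := by
  rw [LG]
  have : (fun S : Fin n → X × Fin 2 => pmfExp (ermPMF (Bbin h) (Bbin_nonempty h) S) (errD D))
      = fun S => psi (errD D h) n (cnt h S) := by
    funext S
    exact integrand_eq D h hm S
  rw [this, integral_comp_cnt D hm]

lemma transfer (D : Measure (X × Fin 2)) [IsProbabilityMeasure D]
    {h : X → Fin 2} (hm : Measurable h) (φ : ℕ → ℝ) (n : ℕ) :
    ∑ k ∈ Finset.range (n+2), φ k * Pb D h (n+1) k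
      = ∑ k ∈ Finset.range (n+1),
          (errD D h * φ (k+1) + (1 - errD D h) * φ k) * Pb D h n k := by
  rw [← integral_comp_cnt D hm φ (n := n+1), fubini_step D hm φ,
    integral_comp_cnt D hm (fun m => φ (1+m)) (n := n), integral_comp_cnt D hm φ (n := n),
    Finset.mul_sum, Finset.mul_sum, ← Finset.sum_add_distrib]
  refine Finset.sum_congr rfl fun k _ => ?_
  rw [Nat.add_comm 1 k]
  ring

lemma delta_nonpos_of_even {p : ℝ} (hp0 : 0 ≤ p) (hp1 : p ≤ 1) {n : ℕ} (he : Even n)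
    (k : ℕ) : p * psi p (n+1) (k+1) + (1-p) * psi p (n+1) k - psi p n k ≤ 0 := by
  obtain ⟨m, rfl⟩ := he
  rcases lt_trichotomy k m with hk | hk | hk
  · have e1 : psi p (m+m+1) (k+1) = p := by rw [psi, if_pos (by omega)]
    have e2 : psi p (m+m+1) k = p := by rw [psi, if_pos (by omega)]
    have e3 : psi p (m+m) k = p := by rw [psi, if_pos (by omega)]
    rw [e1, e2, e3]
    nlinarith
  · subst hk
    have e1 : psi p (k+k+1) (k+1) = 1 - p := by
      rw [psi, if_neg (by omega), if_neg (by omega)]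
    have e2 : psi p (k+k+1) k = p := by rw [psi, if_pos (by omega)]
    have e3 : psi p (k+k) k = 1/2 := by rw [psi, if_neg (by omega), if_pos (by omega)]
    rw [e1, e2, e3]
    nlinarith [sq_nonneg (2*p - 1)]
  · have e1 : psi p (m+m+1) (k+1) = 1 - p := by
      rw [psi, if_neg (by omega), if_neg (by omega)]
    have e2 : psi p (m+m+1) k = 1 - p := by
      rw [psi, if_neg (by omega), if_neg (by omega)]
    have e3 : psi p (m+m) k = 1 - p := by
      rw [psi, if_neg (by omega), if_neg (by omega)]
    rw [e1, e2, e3]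
    nlinarith

lemma delta_zero_of_odd {p : ℝ} {m k : ℕ} (h1 : k ≠ m) (h2 : k ≠ m + 1) :
    p * psi p (2*m+1+1) (k+1) + (1-p) * psi p (2*m+1+1) k - psi p (2*m+1) k = 0 := by
  rcases lt_trichotomy k m with hk | hk | hk
  · have e1 : psi p (2*m+2) (k+1) = p := by rw [psi, if_pos (by omega)]
    have e2 : psi p (2*m+2) k = p := by rw [psi, if_pos (by omega)]
    have e3 : psi p (2*m+1) k = p := by rw [psi, if_pos (by omega)]
    rw [e1, e2, e3]; ring
  · exact absurd hk h1
  · have hk2 : m + 2 ≤ k := by omega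
    have e1 : psi p (2*m+2) (k+1) = 1 - p := by
      rw [psi, if_neg (by omega), if_neg (by omega)]
    have e2 : psi p (2*m+2) k = 1 - p := by
      rw [psi, if_neg (by omega), if_neg (by omega)]
    have e3 : psi p (2*m+1) k = 1 - p := by
      rw [psi, if_neg (by omega), if_neg (by omega)]
    rw [e1, e2, e3]; ring

lemma pb_ratio (D : Measure (X × Fin 2)) [IsProbabilityMeasure D]
    {h : X → Fin 2} (hm : Measurable h) (m : ℕ) :
    errD D h * Pb D h (2*m+1) m = (1 - errD D h) * Pb D h (2*m+1) (m+1) := by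
  rw [Pb_formula D hm _ m (by omega), Pb_formula D hm _ (m+1) (by omega)]
  have h1 : 2*m+1 - m = m+1 := by omega
  have h2 : 2*m+1 - (m+1) = m := by omega
  have h3 : (2*m+1).choose (m+1) = (2*m+1).choose m := by
    have := Nat.choose_symm (by omega : m ≤ 2*m+1)
    rwa [h1] at this
  rw [h1, h2, h3]
  ring

lemma LG_mono (D : Measure (X × Fin 2)) [IsProbabilityMeasure D] [Nonempty X]
    {h : X → Fin 2} (hm : Measurable h) (n : ℕ) :
    LG D (Bbin h) (Bbin_nonempty h) (n + 1) ≤ LG D (Bbin h) (Bbin_nonempty h) n := by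
  set p := errD D h with hp
  have hp0 : 0 ≤ p := errD_nonneg D h
  have hp1 : p ≤ 1 := errD_le_one D h
  rw [LG_eq D hm (n+1), LG_eq D hm n, transfer D hm (psi p (n+1)) n, ← sub_nonpos,
    ← Finset.sum_sub_distrib]
  have hterm : ∀ k ∈ Finset.range (n+1),
      (p * psi p (n+1) (k+1) + (1-p) * psi p (n+1) k) * Pb D h n k
        - psi p n k * Pb D h n k
      = (p * psi p (n+1) (k+1) + (1-p) * psi p (n+1) k - psi p n k) * Pb D h n k :=
    fun k _ => by ring
  rw [Finset.sum_congr rfl hterm]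
  rcases Nat.even_or_odd n with he | ho
  · refine Finset.sum_nonpos fun k _ => ?_
    exact mul_nonpos_iff.mpr (Or.inr ⟨delta_nonpos_of_even hp0 hp1 he k, Pb_nonneg D h n k⟩)
  · obtain ⟨m, rfl⟩ := ho
    have hsub : ({m, m+1} : Finset ℕ) ⊆ Finset.range (2*m+1+1) := by
      intro x hx
      simp only [Finset.mem_insert, Finset.mem_singleton] at hx
      rcases hx with rfl | rfl <;> simp [Finset.mem_range] <;> omega
    rw [← Finset.sum_subset hsub (fun k _ hk => by
      have h1 : k ≠ m := fun e => hk (by simp [e])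
      have h2 : k ≠ m+1 := fun e => hk (by simp [e])
      rw [delta_zero_of_odd h1 h2, zero_mul])]
    rw [Finset.sum_pair (by omega : m ≠ m+1)]
    have e1 : psi p (2*m+1+1) (m+1) = 1/2 := by
      rw [psi, if_neg (by omega), if_pos (by omega)]
    have e2 : psi p (2*m+1+1) (m+2) = 1 - p := by
      rw [psi, if_neg (by omega), if_neg (by omega)]
    have e3 : psi p (2*m+1+1) m = p := by rw [psi, if_pos (by omega)]
    have e4 : psi p (2*m+1) m = p := by rw [psi, if_pos (by omega)]
    have e5 : psi p (2*m+1) (m+1) = 1 - p := by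
      rw [psi, if_neg (by omega), if_neg (by omega)]
    have hid := pb_ratio D hm m
    have : (p * psi p (2*m+1+1) (m+1) + (1-p) * psi p (2*m+1+1) m - psi p (2*m+1) m)
          * Pb D h (2*m+1) m
        + (p * psi p (2*m+1+1) (m+1+1) + (1-p) * psi p (2*m+1+1) (m+1)
            - psi p (2*m+1) (m+1)) * Pb D h (2*m+1) (m+1) = 0 := by
      rw [e1, e3, e4, e5]
      have e2' : psi p (2*m+1+1) (m+1+1) = 1 - p := e2
      rw [e2']
      linear_combination (1/2 - p) * hid
    rw [this]

lemma sum_var (D : Measure (X × Fin 2)) [IsProbabilityMeasure D]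
    {h : X → Fin 2} (hm : Measurable h) :
    ∀ n : ℕ, ∑ k ∈ Finset.range (n+1), ((k:ℝ) - n * errD D h)^2 * Pb D h n k
      = n * (errD D h * (1 - errD D h)) := by
  intro n
  set p := errD D h with hp
  induction n with
  | zero => simp
  | succ n ih =>
      calc ∑ k ∈ Finset.range (n+1+1), ((k:ℝ) - (↑(n+1)) * p)^2 * Pb D h (n+1) k
          = ∑ k ∈ Finset.range (n+2), ((k:ℝ) - ((n:ℝ)+1) * p)^2 * Pb D h (n+1) k := by
            refine Finset.sum_congr rfl fun k _ => ?_
            push_cast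
            ring_nf
        _ = ∑ k ∈ Finset.range (n+1),
              (p * (((k+1 : ℕ):ℝ) - ((n:ℝ)+1) * p)^2
               + (1-p) * ((k:ℝ) - ((n:ℝ)+1) * p)^2) * Pb D h n k := by
            have t := transfer D hm (fun j => ((j:ℝ) - ((n:ℝ)+1) * p)^2) n
            rw [← hp] at t
            exact t
        _ = ∑ k ∈ Finset.range (n+1),
              (((k:ℝ) - n * p)^2 * Pb D h n k + (p * (1-p)) * Pb D h n k) := by
            refine Finset.sum_congr rfl fun k _ => ?_
            push_cast
            ring
        _ = n * (p * (1-p)) + (p * (1-p)) * 1 := by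
            rw [Finset.sum_add_distrib, ih, ← Finset.mul_sum, sum_Pb D hm n]
        _ = (↑(n+1)) * (p * (1-p)) := by push_cast; ring

lemma part_two (D : Measure (X × Fin 2)) [IsProbabilityMeasure D] [Nonempty X]
    {h : X → Fin 2} (hm : Measurable h) (n : ℕ) (hn : 1 ≤ n) :
    ∫ S, max |errS S h - errD D h|
          |errS S (fun x => 1 - h x) - errD D (fun x => 1 - h x)|
        ∂(Measure.pi fun _ : Fin n => D) ≤ 1 / Real.sqrt n := by
  set p := errD D h with hp
  have hp0 : 0 ≤ p := errD_nonneg D h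
  have hp1 : p ≤ 1 := errD_le_one D h
  have hnR : (0:ℝ) < n := by exact_mod_cast hn
  have hfun : ∀ S : Fin n → X × Fin 2,
      max |errS S h - errD D h| |errS S (fun x => 1 - h x) - errD D (fun x => 1 - h x)|
        = |(cnt h S : ℝ)/n - p| := by
    intro S
    rw [errS_eq, errS_neg, errD_neg D h hm, ← hp]
    have hx : ((n:ℝ) - cnt h S)/n - (1 - p) = -((cnt h S : ℝ)/n - p) := by
      field_simp
      ring
    rw [hx, abs_neg, max_self]
  calc ∫ S, max |errS S h - errD D h|
          |errS S (fun x => 1 - h x) - errD D (fun x => 1 - h x)|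
        ∂(Measure.pi fun _ : Fin n => D)
      = ∫ S, |(cnt h S : ℝ)/n - p| ∂(Measure.pi fun _ : Fin n => D) :=
        integral_congr_ae (Filter.Eventually.of_forall hfun)
    _ = ∑ k ∈ Finset.range (n+1), |(k:ℝ)/n - p| * Pb D h n k :=
        integral_comp_cnt D hm (fun k => |(k:ℝ)/n - p|)
    _ ≤ 1 / Real.sqrt n := by
        set Ssum := ∑ k ∈ Finset.range (n+1), |(k:ℝ)/n - p| * Pb D h n k with hSsum
        have hS0 : 0 ≤ Ssum :=
          Finset.sum_nonneg fun k _ => mul_nonneg (abs_nonneg _) (Pb_nonneg D h n k)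
        have hvar : ∑ k ∈ Finset.range (n+1), ((k:ℝ)/n - p)^2 * Pb D h n k
            = p * (1-p) / n := by
          have hv := sum_var D hm n
          have : ∑ k ∈ Finset.range (n+1), ((k:ℝ)/n - p)^2 * Pb D h n k
              = (∑ k ∈ Finset.range (n+1), ((k:ℝ) - n * p)^2 * Pb D h n k) / n^2 := by
            rw [Finset.sum_div]
            refine Finset.sum_congr rfl fun k _ => ?_
            field_simp
            try ring
          rw [this, hv]
          field_simp
          try ring
        have hcs : Ssum^2 ≤ p * (1-p) / n := by
          have key := Finset.sum_mul_sq_le_sq_mul_sq (Finset.range (n+1))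
            (fun k => |(k:ℝ)/n - p| * Real.sqrt (Pb D h n k))
            (fun k => Real.sqrt (Pb D h n k))
          have e1 : ∑ k ∈ Finset.range (n+1),
              (|(k:ℝ)/n - p| * Real.sqrt (Pb D h n k)) * Real.sqrt (Pb D h n k) = Ssum := by
            refine Finset.sum_congr rfl fun k _ => ?_
            rw [mul_assoc, Real.mul_self_sqrt (Pb_nonneg D h n k)]
          have e2 : ∑ k ∈ Finset.range (n+1),
              (|(k:ℝ)/n - p| * Real.sqrt (Pb D h n k))^2
              = ∑ k ∈ Finset.range (n+1), ((k:ℝ)/n - p)^2 * Pb D h n k := by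
            refine Finset.sum_congr rfl fun k _ => ?_
            rw [mul_pow, sq_abs, Real.sq_sqrt (Pb_nonneg D h n k)]
          have e3 : ∑ k ∈ Finset.range (n+1), (Real.sqrt (Pb D h n k))^2 = 1 := by
            rw [← sum_Pb D hm n]
            exact Finset.sum_congr rfl fun k _ => Real.sq_sqrt (Pb_nonneg D h n k)
          rw [e1, e2, e3, mul_one, hvar] at key
          exact key
        have h14 : p * (1-p) / n ≤ (n:ℝ)⁻¹ := by
          rw [div_le_iff₀ hnR]
          have : p * (1-p) ≤ 1 := by nlinarith
          calc p * (1-p) ≤ 1 := this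
            _ = (n:ℝ)⁻¹ * n := by field_simp
        calc Ssum ≤ Real.sqrt (p * (1-p) / n) := Real.le_sqrt_of_sq_le hcs
          _ ≤ Real.sqrt ((n:ℝ)⁻¹) := Real.sqrt_le_sqrt h14
          _ = 1 / Real.sqrt n := by rw [Real.sqrt_inv, one_div]

end Aux

/-- **Successful base class: binary classification** (Proposition 3.1).  In binary
classification the mapping `h ↦ B_h = {h, 1 - h}` is a successful base class with uniform
convergence rate `e(n) = 1/√n` and constant `α = 1/2`: for every distribution `D` on
`X × {0,1}` and every (measurable) hypothesis `h`,
(i) `LG_{n+1}(h) ≤ LG_n(h)` for every `n`;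
(ii) `E_{S∼D^n}[max(|Err_S(h) − Err_D(h)|, |Err_S(1−h) − Err_D(1−h)|)] ≤ 1/√n` for `n ≥ 1`;
(iii) `LG_0(h) = 1/2`. -/
theorem binary_base_class_successful
    (D : Measure (X × Fin 2)) [IsProbabilityMeasure D]
    (h : X → Fin 2) (hmeas : Measurable h) :
    (∀ n : ℕ, LG D (Bbin h) (Bbin_nonempty h) (n + 1) ≤ LG D (Bbin h) (Bbin_nonempty h) n) ∧
    (∀ n : ℕ, 1 ≤ n →
      ∫ S, max |errS S h - errD D h|
            |errS S (fun x => 1 - h x) - errD D (fun x => 1 - h x)|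
          ∂(Measure.pi fun _ : Fin n => D) ≤ 1 / Real.sqrt n) ∧
    LG D (Bbin h) (Bbin_nonempty h) 0 = 1 / 2 := by
  have hXne : Nonempty (X × Fin 2) := Measure.nonempty_of_neZero D
  haveI : Nonempty X := hXne.map Prod.fst
  refine ⟨fun n => LG_mono D hmeas n, fun n hn => part_two D hmeas n hn, ?_⟩
  rw [LG_eq D hmeas 0, Finset.sum_range_one, Pb_zero_zero D h, mul_one, psi,
    if_neg (by omega), if_pos rfl]

end
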